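/- Let d ≥ 1, let 0 < ε ≤ 1/ε ≤ K, and let f, g : ℝ^d → ℝ be smooth with g compactly supported. Suppose |∇f(ξ)| ≥ 1 for all ξ ∈ supp g, and for every integer L′ ≥ 2 there is a constant C_{L′} with |∇^{L′} f(ξ)| ≤ C_{L′} ε^{1−L′} on supp g. Then for every integer L ≥ 1, |∫_{ℝ^d} e^{iKf(ξ)} g(ξ) dξ| ≲_{d,L} (Kε)^{−L} Σ_{l=0}^{L} ε^l ‖∇^l g‖_{L¹(ℝ^d)}, with an implicit constant depending only on d, L and the constants C_{L′}. -/

import Mathlib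

/-!
Common framework: functions on the torus `𝕋_R = (ℝ/Rℤ)²` are modelled as
`R`-periodic functions on `ℝ²`; Fourier multipliers are defined through the
Fourier coefficients on the frequency lattice `(2πℤ/R)²`.
-/

noncomputable section

open MeasureTheory Real Set
open scoped ENNReal NNReal

abbrev T2 : Type := ℝ × ℝ

namespace EP

/-- Euclidean dot product on ℝ². -/
def dot2 (x y : T2) : ℝ := x.1 * y.1 + x.2 * y.2

/-- Euclidean norm on ℝ². -/
def en (x : T2) : ℝ := Real.sqrt (dot2 x x)

/-- A point of the lattice (Rℤ)². -/
def lat (R : ℝ) (k : ℤ × ℤ) : T2 := (R * (k.1 : ℝ), R * (k.2 : ℝ))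

/-- A point of the frequency lattice (2πℤ/R)². -/
def freq (R : ℝ) (k : ℤ × ℤ) : T2 := (2 * π * (k.1 : ℝ) / R, 2 * π * (k.2 : ℝ) / R)

/-- R-periodicity (function on the torus of size R). -/
def PeriodicC (R : ℝ) (u : T2 → ℂ) : Prop := ∀ (x : T2) (k : ℤ × ℤ), u (x + lat R k) = u x

def PeriodicR (R : ℝ) (u : T2 → ℝ) : Prop := ∀ (x : T2) (k : ℤ × ℤ), u (x + lat R k) = u x

/-- A fundamental domain for the torus. -/
def box (R : ℝ) : Set T2 := Ioc (0:ℝ) R ×ˢ Ioc (0:ℝ) R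

/-- Lebesgue measure on the fundamental domain. -/
def μbox (R : ℝ) : Measure T2 := volume.restrict (box R)

/-- Fourier coefficient û(ξ) at ξ = freq R k. -/
def fCoeff (R : ℝ) (u : T2 → ℂ) (k : ℤ × ℤ) : ℂ :=
  ∫ x in box R, u x * Complex.exp (-Complex.I * ((dot2 x (freq R k) : ℝ) : ℂ))

/-- Fourier multiplier with symbol m. -/
def op (R : ℝ) (m : T2 → ℂ) (u : T2 → ℂ) : T2 → ℂ := fun x =>
  (1 / (R : ℂ) ^ 2) * ∑' k : ℤ × ℤ,
    m (freq R k) * fCoeff R u k * Complex.exp (Complex.I * ((dot2 x (freq R k) : ℝ) : ℂ))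

/-- L^p norm on the torus (valued in ℝ≥0∞). -/
def LpE (R : ℝ) (p : ℝ≥0∞) (u : T2 → ℂ) : ℝ≥0∞ := eLpNorm u p (μbox R)

/-- Λ(ξ) = √(1+|ξ|²). -/
def lam (ξ : T2) : ℝ := Real.sqrt (1 + dot2 ξ ξ)

/-- The operator Λ^s. -/
def lamPow (R : ℝ) (s : ℝ) (u : T2 → ℂ) : T2 → ℂ :=
  op R (fun ξ => ((lam ξ ^ s : ℝ) : ℂ)) u

/-- H^s norm: ‖Λ^s u‖_{L²}. -/
def HNe (R : ℝ) (s : ℝ) (u : T2 → ℂ) : ℝ≥0∞ := LpE R 2 (lamPow R s u)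

/-- Complexification of a real function. -/
def cf (u : T2 → ℝ) : T2 → ℂ := fun x => (u x : ℂ)

/-- |∇|^{-1} (acting as 0 on the zero frequency). -/
def invGrad (R : ℝ) (u : T2 → ℂ) : T2 → ℂ := op R (fun ξ => (((en ξ)⁻¹ : ℝ) : ℂ)) u

/-- |∇|. -/
def absGrad (R : ℝ) (u : T2 → ℂ) : T2 → ℂ := op R (fun ξ => ((en ξ : ℝ) : ℂ)) u

/-- Λ|∇|^{-1}. -/
def LamInvGrad (R : ℝ) (u : T2 → ℂ) : T2 → ℂ :=
  op R (fun ξ => ((lam ξ * (en ξ)⁻¹ : ℝ) : ℂ)) u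

/-- The linear propagator e^{itΛ}. -/
def flow (R : ℝ) (t : ℝ) (u : T2 → ℂ) : T2 → ℂ :=
  op R (fun ξ => Complex.exp (Complex.I * (t : ℂ) * ((lam ξ : ℝ) : ℂ))) u

/-- U = Λ|∇|^{-1}ρ + i|∇|h. -/
def Ufun (R : ℝ) (ρ h : T2 → ℝ) : T2 → ℂ := fun x =>
  LamInvGrad R (cf ρ) x + Complex.I * absGrad R (cf h) x

/-- Partial derivatives on ℝ². -/
def d1 (f : T2 → ℝ) (x : T2) : ℝ := fderiv ℝ f x ((1:ℝ), (0:ℝ))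
def d2 (f : T2 → ℝ) (x : T2) : ℝ := fderiv ℝ f x ((0:ℝ), (1:ℝ))
def grad2 (f : T2 → ℝ) (x : T2) : T2 := (d1 f x, d2 f x)
def div2 (v : T2 → T2) (x : T2) : ℝ := d1 (fun y => (v y).1) x + d2 (fun y => (v y).2) x
def lap2 (f : T2 → ℝ) (x : T2) : ℝ := d1 (d1 f) x + d2 (d2 f) x

/-- The Euler–Poisson system on the torus of size `R`, on the time interval `[0, T]`,
for an irrotational velocity `v = ∇h`: `ρ_t + ∇·((1+ρ)v) = 0`,
`v_t + (v·∇)v + ∇ρ = ∇φ`, `Δφ = ρ`, with charge neutrality and zero momentum. -/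
structure IsEPSol (R T : ℝ) (ρ h φp : ℝ → T2 → ℝ) : Prop where
  per_rho : ∀ t ∈ Icc (0:ℝ) T, PeriodicR R (ρ t)
  per_h : ∀ t ∈ Icc (0:ℝ) T, PeriodicR R (h t)
  per_phi : ∀ t ∈ Icc (0:ℝ) T, PeriodicR R (φp t)
  reg_rho : ∀ t ∈ Icc (0:ℝ) T, ContDiff ℝ 1 (ρ t)
  reg_h : ∀ t ∈ Icc (0:ℝ) T, ContDiff ℝ 2 (h t)
  reg_phi : ∀ t ∈ Icc (0:ℝ) T, ContDiff ℝ 2 (φp t)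
  reg_t_rho : ∀ t ∈ Icc (0:ℝ) T, ∀ x : T2, DifferentiableAt ℝ (fun s => ρ s x) t
  reg_t_v : ∀ t ∈ Icc (0:ℝ) T, ∀ x : T2,
    DifferentiableAt ℝ (fun s => (grad2 (h s) x).1) t ∧
    DifferentiableAt ℝ (fun s => (grad2 (h s) x).2) t
  cont_eq : ∀ t ∈ Icc (0:ℝ) T, ∀ x : T2,
    deriv (fun s => ρ s x) t + div2 (fun y => (1 + ρ t y) • grad2 (h t) y) x = 0
  mom_eq1 : ∀ t ∈ Icc (0:ℝ) T, ∀ x : T2,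
    deriv (fun s => (grad2 (h s) x).1) t
      + (grad2 (h t) x).1 * d1 (fun y => (grad2 (h t) y).1) x
      + (grad2 (h t) x).2 * d2 (fun y => (grad2 (h t) y).1) x
      + d1 (ρ t) x = d1 (φp t) x
  mom_eq2 : ∀ t ∈ Icc (0:ℝ) T, ∀ x : T2,
    deriv (fun s => (grad2 (h s) x).2) t
      + (grad2 (h t) x).1 * d1 (fun y => (grad2 (h t) y).2) x
      + (grad2 (h t) x).2 * d2 (fun y => (grad2 (h t) y).2) x
      + d2 (ρ t) x = d2 (φp t) x
  poisson_eq : ∀ t ∈ Icc (0:ℝ) T, ∀ x : T2, lap2 (φp t) x = ρ t x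
  neutral : ∀ t ∈ Icc (0:ℝ) T, (∫ x in box R, ρ t x) = 0
  zero_mom : ∀ t ∈ Icc (0:ℝ) T, (∫ x in box R, grad2 (h t) x) = (0 : T2)

/-- `U ∈ C([0,T], H^s)`: finiteness of the `H^s` norm and continuity in the `H^s` metric. -/
def ContHN (R : ℝ) (s T : ℝ) (U : ℝ → T2 → ℂ) : Prop :=
  (∀ t ∈ Icc (0:ℝ) T, HNe R s (U t) < ⊤) ∧
  (∀ t ∈ Icc (0:ℝ) T, ∀ ε : ℝ, 0 < ε → ∃ δ : ℝ, 0 < δ ∧ ∀ t' ∈ Icc (0:ℝ) T,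
    |t' - t| < δ → HNe R s (fun x => U t' x - U t x) < ENNReal.ofReal ε)

/-- `U ∈ C¹([0,T], H^s)`: differentiability in the `H^s` metric with continuous derivative. -/
def C1HN (R : ℝ) (s T : ℝ) (U : ℝ → T2 → ℂ) : Prop :=
  ∃ U' : ℝ → T2 → ℂ, ContHN R s T U' ∧
    ∀ t ∈ Icc (0:ℝ) T, ∀ ε : ℝ, 0 < ε → ∃ δ : ℝ, 0 < δ ∧ ∀ t' ∈ Icc (0:ℝ) T,
      t' ≠ t → |t' - t| < δ →
      HNe R s (fun x => (((t' - t : ℝ) : ℂ))⁻¹ * (U t' x - U t x) - U' t x)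
        < ENNReal.ofReal ε

/-- H^s norm of a vector field (sum over the two components). -/
def HNev (R : ℝ) (s : ℝ) (v : T2 → T2) : ℝ≥0∞ :=
  HNe R s (cf (fun x => (v x).1)) + HNe R s (cf (fun x => (v x).2))

/-- A smooth radial-type cutoff: 1 on B(0,2/3), 0 outside B(0,3/2), values in [0,1]. -/
def IsCutoff (φ : T2 → ℝ) : Prop :=
  ContDiff ℝ (⊤ : ℕ∞) φ ∧ (∀ x : T2, φ x ∈ Icc (0:ℝ) 1) ∧
  (∀ x : T2, en x ≤ 2/3 → φ x = 1) ∧ (∀ x : T2, (3:ℝ)/2 ≤ en x → φ x = 0)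

/-- φ_k(ξ) = φ(ξ/2^k) − φ(ξ/2^{k-1}). -/
def phiK (φ : T2 → ℝ) (k : ℤ) (ξ : T2) : ℝ :=
  φ ((2:ℝ) ^ (-k) • ξ) - φ ((2:ℝ) ^ (-(k-1)) • ξ)

/-- Littlewood–Paley projection P_k. -/
def PK (R : ℝ) (φ : T2 → ℝ) (k : ℤ) (u : T2 → ℂ) : T2 → ℂ :=
  op R (fun ξ => ((phiK φ k ξ : ℝ) : ℂ)) u

/-- P_{[a,b]} = Σ_{a ≤ k ≤ b} P_k. -/
def PKband (R : ℝ) (φ : T2 → ℝ) (a b : ℤ) (u : T2 → ℂ) : T2 → ℂ := fun x =>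
  ∑ j ∈ Finset.Icc a b, PK R φ j u x

/-- P_{≥0} = Σ_{k ≥ 0} P_k, i.e. the multiplier 1 − φ_{≤ -1}(ξ) = 1 − φ(2ξ). -/
def Pge0 (R : ℝ) (φ : T2 → ℝ) (u : T2 → ℂ) : T2 → ℂ :=
  op R (fun ξ => (((1 : ℝ) - φ ((2:ℝ) • ξ) : ℝ) : ℂ)) u

/-- k⁺ = max(k, 0). -/
def kplus (k : ℤ) : ℤ := max k 0

/-- The X norm: Σ_k 2^{Mk⁺} ‖P_k u‖_{L^∞}. -/
def XnormE (R : ℝ) (φ : T2 → ℝ) (M : ℕ) (u : T2 → ℂ) : ℝ≥0∞ :=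
  ∑' k : ℤ, ENNReal.ofReal ((2:ℝ) ^ ((M : ℤ) * kplus k)) * LpE R ⊤ (PK R φ k u)

/-- ‖x‖ = dist(x, (Rℤ)²). -/
def torusDist (R : ℝ) (x : T2) : ℝ := ⨅ k : ℤ × ℤ, en (x - lat R k)

/-- The Z norm: ‖(1+‖x‖)^{2/3} Λ^{M+2} u‖_{L²}. -/
def ZnormE (R : ℝ) (M : ℕ) (u : T2 → ℂ) : ℝ≥0∞ :=
  LpE R 2 (fun x => (((1 + torusDist R x) ^ ((2:ℝ)/3) : ℝ) : ℂ) * lamPow R ((M:ℝ) + 2) u x)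

def ZnormEv (R : ℝ) (M : ℕ) (v : T2 → T2) : ℝ≥0∞ :=
  ZnormE R M (cf (fun x => (v x).1)) + ZnormE R M (cf (fun x => (v x).2))

/-- ‖U‖_{L²([0,t]) X}. -/
def L2X (R : ℝ) (φ : T2 → ℝ) (M : ℕ) (t : ℝ) (U : ℝ → T2 → ℂ) : ℝ≥0∞ :=
  (∫⁻ s in Icc (0:ℝ) t, (XnormE R φ M (U s)) ^ 2) ^ ((1:ℝ)/2)

/-- Fourier coefficient in x of a symbol a(x,ζ). -/
def symCoeff (R : ℝ) (a : T2 → T2 → ℂ) (k : ℤ × ℤ) (ζ : T2) : ℂ :=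
  ∫ x in box R, a x ζ * Complex.exp (-Complex.I * ((dot2 x (freq R k) : ℝ) : ℂ))

/-- φ_{≤-10}(|ξ−η|/|ξ+η|), taken to be 0 when ξ+η = 0. -/
def cutRatio (φ : T2 → ℝ) (ξ η : T2) : ℝ :=
  if ξ + η = (0 : T2) then 0
  else φ ((((2:ℝ) ^ (10 : ℕ) * en (ξ - η) / en (ξ + η) : ℝ), (0:ℝ)) : T2)

/-- The (Weyl-quantized) paradifferential operator T_a. -/
def Ta (R : ℝ) (φ : T2 → ℝ) (a : T2 → T2 → ℂ) (f : T2 → ℂ) : T2 → ℂ := fun x =>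
  (1 / (R : ℂ) ^ 2) * ∑' ξi : ℤ × ℤ,
    ((1 / (R : ℂ) ^ 2) * ∑' ηi : ℤ × ℤ,
      ((cutRatio φ (freq R ξi) (freq R ηi) : ℝ) : ℂ) *
        symCoeff R a (ξi - ηi) ((2:ℝ)⁻¹ • (freq R ξi + freq R ηi)) * fCoeff R f ηi) *
    Complex.exp (Complex.I * ((dot2 x (freq R ξi) : ℝ) : ℂ))

/-- |a|(x,ζ) = Σ_{|I| ≤ 8} |ζ|^{|I|} |∂^I_ζ a(x,ζ)|. -/
def symAbs (a : T2 → T2 → ℂ) (x ζ : T2) : ℝ :=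
  ∑ n ∈ Finset.range 9, en ζ ^ n * ‖iteratedFDeriv ℝ n (a x) ζ‖

/-- ‖a‖_{𝓛^q_m} ≤ A, stated as: ‖ |a|(·,ζ) ‖_{L^q} ≤ A (1+|ζ|)^m for all ζ ≠ 0. -/
def SymLe (R : ℝ) (m : ℝ) (q : ℝ≥0∞) (a : T2 → T2 → ℂ) (A : ℝ) : Prop :=
  ∀ ζ : T2, ζ ≠ 0 →
    eLpNorm (fun x => symAbs a x ζ) q (μbox R) ≤ ENNReal.ofReal (A * (1 + en ζ) ^ m)

def symAbsDx (a : T2 → T2 → ℂ) (x ζ : T2) : ℝ :=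
  ∑ n ∈ Finset.range 9,
    en ζ ^ n * ‖iteratedFDeriv ℝ n (fun ζ' => fderiv ℝ (fun x' => a x' ζ') x) ζ‖

/-- ‖∇_x a‖_{𝓛^q_m} ≤ A. -/
def SymDxLe (R : ℝ) (m : ℝ) (q : ℝ≥0∞) (a : T2 → T2 → ℂ) (A : ℝ) : Prop :=
  ∀ ζ : T2, ζ ≠ 0 →
    eLpNorm (fun x => symAbsDx a x ζ) q (μbox R) ≤ ENNReal.ofReal (A * (1 + en ζ) ^ m)

/-- T_f for a symbol f(x) independent of ζ. -/
def TaF (R : ℝ) (φ : T2 → ℝ) (f g : T2 → ℂ) : T2 → ℂ := Ta R φ (fun x _ => f x) g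

/-- H(f,g) = fg − T_f g − T_g f. -/
def Hbil (R : ℝ) (φ : T2 → ℝ) (f g : T2 → ℂ) : T2 → ℂ := fun x =>
  f x * g x - TaF R φ f g x - TaF R φ g f x

/-- E(a,b) = T_a T_b − T_{ab}. -/
def E2 (R : ℝ) (φ : T2 → ℝ) (a b : T2 → T2 → ℂ) (f : T2 → ℂ) : T2 → ℂ := fun x =>
  Ta R φ a (Ta R φ b f) x - Ta R φ (fun y ζ => a y ζ * b y ζ) f x

/-- E(a,b,c) = T_a T_b T_c − T_{abc}. -/
def E3 (R : ℝ) (φ : T2 → ℝ) (a b c : T2 → T2 → ℂ) (f : T2 → ℂ) : T2 → ℂ := fun x =>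
  Ta R φ a (Ta R φ b (Ta R φ c f)) x - Ta R φ (fun y ζ => a y ζ * b y ζ * c y ζ) f x

/-- T_{a_1} ⋯ T_{a_n}. -/
def TaChain (R : ℝ) (φ : T2 → ℝ) : {n : ℕ} → (Fin n → T2 → T2 → ℂ) → (T2 → ℂ) → (T2 → ℂ)
  | 0, _, f => f
  | _ + 1, a, f => Ta R φ (a 0) (TaChain R φ (fun j => a j.succ) f)

/-- E(a_1,…,a_n) = T_{a_1}⋯T_{a_n} − T_{a_1⋯a_n}. -/
def EnOp (R : ℝ) (φ : T2 → ℝ) {n : ℕ} (a : Fin n → T2 → T2 → ℂ) (f : T2 → ℂ) : T2 → ℂ :=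
  fun x => TaChain R φ a f x - Ta R φ (fun y ζ => ∏ j, a j y ζ) f x

/-- Real part of the L² inner product on the torus. -/
def ipRe (R : ℝ) (f g : T2 → ℂ) : ℝ := (∫ x in box R, f x * (starRingEnd ℂ) (g x)).re

/-- The phase Φ_{μν}(ξ₁,ξ₂) = Λ(ξ₁+ξ₂) − μΛ(ξ₁) − νΛ(ξ₂), for signs μ, ν ∈ {1,-1}. -/
def Phi (μ ν : ℝ) (ξ₁ ξ₂ : T2) : ℝ := lam (ξ₁ + ξ₂) - μ * lam ξ₁ - ν * lam ξ₂

def mA (ξ₁ ξ₂ : T2) : ℂ := ((lam (ξ₁ + ξ₂) * en ξ₁ / lam ξ₁ : ℝ) : ℂ)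
def mB (ξ₁ ξ₂ : T2) : ℂ := ((lam (ξ₁ + ξ₂) * en ξ₂ / lam ξ₂ : ℝ) : ℂ)
def mC (ξ₁ ξ₂ : T2) : ℂ := ((en (ξ₁ + ξ₂) : ℝ) : ℂ)

/-- The basic quadratic multipliers of the Euler–Poisson nonlinearity. -/
def IsBasicM (m : T2 → T2 → ℂ) : Prop := m = mA ∨ m = mB ∨ m = mC

/-- f_+ = f, f_- = conj f (for a sign μ ∈ {1,-1}). -/
def sgnFun (μ : ℝ) (f : T2 → ℂ) : T2 → ℂ :=
  if μ = 1 then f else fun x => (starRingEnd ℂ) (f x)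

/-- v_j, the j-th component of v = ∇h. -/
def vcomp (h : T2 → ℝ) (j : Fin 2) : T2 → ℝ := fun x => if j = 0 then d1 h x else d2 h x

/-- The semilinear quadratic term 𝓢 = −ΛR_j H(ρ, v_j) − (i/2)|∇|H(v_j, v_j). -/
def calS (R : ℝ) (φ : T2 → ℝ) (ρ h : T2 → ℝ) : T2 → ℂ := fun x =>
  -(∑ j : Fin 2, op R
      (fun ξ => ((lam ξ : ℝ) : ℂ) *
        (Complex.I * (((if j = (0 : Fin 2) then ξ.1 else ξ.2) : ℝ) : ℂ) * (((en ξ)⁻¹ : ℝ) : ℂ)))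
      (Hbil R φ (cf ρ) (cf (vcomp h j))) x)
  - (Complex.I / 2) * ∑ j : Fin 2, absGrad R (Hbil R φ (cf (vcomp h j)) (cf (vcomp h j))) x

/-- 𝓤 = X + i T_{√(1+ρ)} Y. -/
def calU (R : ℝ) (φ : T2 → ℝ) (ρ h : T2 → ℝ) : T2 → ℂ := fun x =>
  LamInvGrad R (cf ρ) x +
    Complex.I * Ta R φ (fun y _ => ((Real.sqrt (1 + ρ y) : ℝ) : ℂ)) (absGrad R (cf h)) x

def sqrtSym (ρ : T2 → ℝ) : T2 → T2 → ℂ := fun y _ => ((Real.sqrt (1 + ρ y) : ℝ) : ℂ)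
def sqrtm1Sym (ρ : T2 → ℝ) : T2 → T2 → ℂ := fun y _ => ((Real.sqrt (1 + ρ y) - 1 : ℝ) : ℂ)
def vdotSym (h : T2 → ℝ) : T2 → T2 → ℂ := fun y ζ => ((dot2 (grad2 h y) ζ : ℝ) : ℂ)
def lamSym2 : T2 → T2 → ℂ := fun _ ζ => ((lam ζ : ℝ) : ℂ)
def enSym2 : T2 → T2 → ℂ := fun _ ζ => ((en ζ : ℝ) : ℂ)
def zetaOverEn (j : Fin 2) : T2 → T2 → ℂ :=
  fun _ ζ => (((if j = (0 : Fin 2) then ζ.1 else ζ.2) * (en ζ)⁻¹ : ℝ) : ℂ)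
def lamZetaOverEn (j : Fin 2) : T2 → T2 → ℂ :=
  fun _ ζ => ((lam ζ * (if j = (0 : Fin 2) then ζ.1 else ζ.2) * (en ζ)⁻¹ : ℝ) : ℂ)
def enOverLam : T2 → T2 → ℂ := fun _ ζ => ((en ζ * (lam ζ)⁻¹ : ℝ) : ℂ)
def rhoSym (ρ : T2 → ℝ) : T2 → T2 → ℂ := fun y _ => ((ρ y : ℝ) : ℂ)
def vjSym (h : T2 → ℝ) (j : Fin 2) : T2 → T2 → ℂ := fun y _ => ((vcomp h j y : ℝ) : ℂ)
open scoped RealInnerProductSpace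

namespace NSP

/-- A smooth function equal to `t⁻¹` for `t ≥ 1/4` and to `0` for `t ≤ 1/8`. -/
def phi (t : ℝ) : ℝ := Real.smoothTransition (16 * t - 2) * t⁻¹

lemma phi_eq_inv {t : ℝ} (h : (4:ℝ)⁻¹ ≤ t) : phi t = t⁻¹ := by
  unfold phi
  rw [Real.smoothTransition.one_of_one_le (by linarith), one_mul]

lemma phi_eq_zero {t : ℝ} (h : t ≤ (8:ℝ)⁻¹) : phi t = 0 := by
  unfold phi
  rw [Real.smoothTransition.zero_of_nonpos (by linarith), zero_mul]

lemma phi_contDiff : ContDiff ℝ (⊤ : ℕ∞) phi := by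
  rw [contDiff_iff_contDiffAt]
  intro x
  rcases lt_or_ge x ((7:ℝ)/56) with hx | hx
  · have : phi =ᶠ[nhds x] fun _ => 0 := by
      filter_upwards [Iio_mem_nhds (show x < (8:ℝ)⁻¹ by norm_num at hx ⊢; linarith)] with t ht
      exact phi_eq_zero (le_of_lt ht)
    exact (contDiffAt_const (c := (0:ℝ))).congr_of_eventuallyEq this
  · have hx0 : x ≠ 0 := by intro h; rw [h] at hx; norm_num at hx
    have h1 : ContDiffAt ℝ (⊤ : ℕ∞) (fun t : ℝ => 16 * t - 2) x :=
      ((contDiff_id.const_smul (16:ℝ)).sub contDiff_const).contDiffAt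
    exact (Real.smoothTransition.contDiffAt.comp x h1).mul (contDiffAt_inv ℝ hx0)


lemma iteratedFDeriv_congr_ev {X Y : Type*} [NormedAddCommGroup X] [NormedSpace ℝ X]
    [NormedAddCommGroup Y] [NormedSpace ℝ Y] {f g : X → Y} {x : X}
    (h : f =ᶠ[nhds x] g) (n : ℕ) : iteratedFDeriv ℝ n f x = iteratedFDeriv ℝ n g x := by
  simp only [← iteratedFDerivWithin_univ]
  apply Filter.EventuallyEq.iteratedFDerivWithin_eq
  · rwa [nhdsWithin_univ]
  · exact h.eq_of_nhds

variable {d : ℕ}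

/-- The vector field `y ↦ y / ‖y‖²`, smoothly cut off near the origin. -/
def Gv (d : ℕ) (y : EuclideanSpace ℝ (Fin d)) : EuclideanSpace ℝ (Fin d) := phi (‖y‖ ^ 2) • y

lemma Gv_contDiff : ContDiff ℝ (⊤ : ℕ∞) (Gv d) :=
  (phi_contDiff.comp (contDiff_norm_sq ℝ)).smul contDiff_id

lemma Gv_eq {y : EuclideanSpace ℝ (Fin d)} (h : 2⁻¹ ≤ ‖y‖) : Gv d y = (‖y‖ ^ 2)⁻¹ • y := by
  unfold Gv; rw [phi_eq_inv]; nlinarith [norm_nonneg y]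

lemma Gv_bound (d m : ℕ) : ∃ B : ℝ, 0 ≤ B ∧
    ∀ y : EuclideanSpace ℝ (Fin d), ‖iteratedFDeriv ℝ m (Gv d) y‖ ≤ B := by
  obtain ⟨C, hC⟩ : ∃ C, ∀ y ∈ Metric.closedBall (0 : EuclideanSpace ℝ (Fin d)) 2,
      ‖iteratedFDeriv ℝ m (Gv d) y‖ ≤ C := by
    obtain ⟨C, hC⟩ := (isCompact_closedBall (0 : EuclideanSpace ℝ (Fin d)) 2).exists_bound_of_continuousOn
      ((Gv_contDiff.continuous_iteratedFDeriv (by exact_mod_cast le_top)).continuousOn)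
    exact ⟨C, hC⟩
  refine ⟨max C 0, le_max_right _ _, fun y => ?_⟩
  rcases le_or_gt ‖y‖ 2 with hy | hy
  · exact le_max_of_le_left (hC y (by simpa [Metric.mem_closedBall, dist_eq_norm] using hy))
  · set l : ℝ := ‖y‖ with hl
    have l0 : (0:ℝ) < l := by positivity
    have l2 : (2:ℝ) ≤ l := hy.le
    set z : EuclideanSpace ℝ (Fin d) := l⁻¹ • y with hz
    have hznorm : ‖z‖ = 1 := by
      rw [hz, norm_smul, norm_inv, Real.norm_eq_abs, abs_of_pos l0, ← hl,
        inv_mul_cancel₀ l0.ne']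
    set Lmu : EuclideanSpace ℝ (Fin d) →L[ℝ] EuclideanSpace ℝ (Fin d) :=
      l⁻¹ • ContinuousLinearMap.id ℝ (EuclideanSpace ℝ (Fin d)) with hLmu
    set Phi : EuclideanSpace ℝ (Fin d) → EuclideanSpace ℝ (Fin d) :=
      (Gv d) ∘ (fun w => l • w) with hPhidef
    have hPhi : ContDiff ℝ (⊤ : ℕ∞) Phi := Gv_contDiff.comp (contDiff_const_smul l)
    have hGP : Gv d = Phi ∘ Lmu := by
      funext w
      simp only [hPhidef, hLmu, Function.comp_apply, ContinuousLinearMap.smul_apply,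
        ContinuousLinearMap.id_apply, smul_smul, mul_inv_cancel₀ l0.ne', one_smul]
    have hLz : Lmu y = z := by
      simp [hLmu, hz]
    have key : iteratedFDeriv ℝ m (Gv d) y =
        (iteratedFDeriv ℝ m Phi z).compContinuousLinearMap fun _ => Lmu := by
      rw [hGP, ← hLz]
      exact Lmu.iteratedFDeriv_comp_right hPhi y (by exact_mod_cast le_top)
    -- identify the derivative of Phi at z
    have hev : Phi =ᶠ[nhds z] fun w => l⁻¹ • Gv d w := by
      have hzO : z ∈ {w : EuclideanSpace ℝ (Fin d) | 2⁻¹ < ‖w‖} := by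
        show (2:ℝ)⁻¹ < ‖z‖
        rw [hznorm]; norm_num
      filter_upwards [(isOpen_lt continuous_const continuous_norm).mem_nhds hzO] with w hw
      have hw' : (2:ℝ)⁻¹ ≤ ‖w‖ := le_of_lt hw
      have hlw : (2:ℝ)⁻¹ ≤ ‖l • w‖ := by
        rw [norm_smul, Real.norm_eq_abs, abs_of_pos l0]
        nlinarith
      have hwne : ‖w‖ ≠ 0 := by positivity
      simp only [hPhidef, Function.comp_apply, Gv_eq hlw, Gv_eq hw']
      rw [norm_smul, Real.norm_eq_abs, abs_of_pos l0, smul_smul, smul_smul]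
      congr 1
      field_simp
    have hnorm1 : ‖iteratedFDeriv ℝ m Phi z‖ ≤ C := by
      rw [iteratedFDeriv_congr_ev hev m,
        iteratedFDeriv_const_smul_apply' ((Gv_contDiff (d := d)).of_le (by exact_mod_cast le_top : ((m:ℕ) : WithTop ℕ∞) ≤ ((⊤:ℕ∞) : WithTop ℕ∞))).contDiffAt]
      refine le_trans (norm_smul_le _ _) ?_
      rw [norm_inv, Real.norm_eq_abs, abs_of_pos l0]
      have hzball : z ∈ Metric.closedBall (0 : EuclideanSpace ℝ (Fin d)) 2 := by
        simp [Metric.mem_closedBall, dist_eq_norm, hznorm]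
      have h1 : ‖iteratedFDeriv ℝ m (Gv d) z‖ ≤ C := hC z hzball
      have h2 : l⁻¹ ≤ 1 := by
        rw [inv_le_one_iff₀]; right; linarith
      have h3 : (0:ℝ) ≤ ‖iteratedFDeriv ℝ m (Gv d) z‖ := norm_nonneg _
      calc l⁻¹ * ‖iteratedFDeriv ℝ m (Gv d) z‖ ≤ 1 * ‖iteratedFDeriv ℝ m (Gv d) z‖ := by
            apply mul_le_mul_of_nonneg_right h2 h3
        _ = ‖iteratedFDeriv ℝ m (Gv d) z‖ := one_mul _
        _ ≤ C := h1
    have hLmu_norm : ‖Lmu‖ ≤ 1 := by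
      rw [hLmu]
      refine le_trans (ContinuousLinearMap.opNorm_smul_le _ _) ?_
      rw [norm_inv, Real.norm_eq_abs, abs_of_pos l0]
      calc l⁻¹ * ‖ContinuousLinearMap.id ℝ (EuclideanSpace ℝ (Fin d))‖ ≤ 1 * 1 := by
            apply mul_le_mul (by rw [inv_le_one_iff₀]; right; linarith)
              ContinuousLinearMap.norm_id_le (norm_nonneg _) one_pos.le
        _ = 1 := one_mul 1
    calc ‖iteratedFDeriv ℝ m (Gv d) y‖
        ≤ ‖iteratedFDeriv ℝ m Phi z‖ * ∏ _i : Fin m, ‖Lmu‖ := by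
          rw [key]; exact ContinuousMultilinearMap.norm_compContinuousLinearMap_le _ _
      _ ≤ C * 1 := by
          apply mul_le_mul hnorm1 (Finset.prod_le_one (fun _ _ => norm_nonneg _)
            (fun _ _ => hLmu_norm)) (Finset.prod_nonneg fun _ _ => norm_nonneg _)
            (le_trans (norm_nonneg _) hnorm1)
      _ ≤ max C 0 := by rw [mul_one]; exact le_max_left _ _


/-- The trace functional `A ↦ ∑ i ⟪bᵢ, A bᵢ⟫` on endomorphisms of `ℝᵈ`. -/
def trCLM (d : ℕ) : (EuclideanSpace ℝ (Fin d) →L[ℝ] EuclideanSpace ℝ (Fin d)) →L[ℝ] ℝ :=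
  ∑ i : Fin d, (innerSL ℝ (EuclideanSpace.basisFun (Fin d) ℝ i)).comp
    (ContinuousLinearMap.apply ℝ (EuclideanSpace ℝ (Fin d)) (EuclideanSpace.basisFun (Fin d) ℝ i))

lemma trCLM_apply (d : ℕ) (A : EuclideanSpace ℝ (Fin d) →L[ℝ] EuclideanSpace ℝ (Fin d)) :
    trCLM d A = ∑ i : Fin d,
      ⟪EuclideanSpace.basisFun (Fin d) ℝ i, A (EuclideanSpace.basisFun (Fin d) ℝ i)⟫ := by
  simp [trCLM]

lemma trCLM_norm (d : ℕ) : ‖trCLM d‖ ≤ d := by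
  refine ContinuousLinearMap.opNorm_le_bound _ (by positivity) fun A => ?_
  rw [trCLM_apply]
  calc ‖∑ i : Fin d, ⟪EuclideanSpace.basisFun (Fin d) ℝ i,
        A (EuclideanSpace.basisFun (Fin d) ℝ i)⟫‖
      ≤ ∑ i : Fin d, ‖⟪EuclideanSpace.basisFun (Fin d) ℝ i,
        A (EuclideanSpace.basisFun (Fin d) ℝ i)⟫‖ := norm_sum_le _ _
    _ ≤ ∑ _i : Fin d, ‖A‖ := by
        apply Finset.sum_le_sum
        intro i _
        have h1 : ‖⟪EuclideanSpace.basisFun (Fin d) ℝ i,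
            A (EuclideanSpace.basisFun (Fin d) ℝ i)⟫‖
            ≤ ‖EuclideanSpace.basisFun (Fin d) ℝ i‖ *
              ‖A (EuclideanSpace.basisFun (Fin d) ℝ i)‖ := norm_inner_le_norm _ _
        have h2 : ‖EuclideanSpace.basisFun (Fin d) ℝ i‖ = 1 :=
          (EuclideanSpace.basisFun (Fin d) ℝ).orthonormal.1 i
        have h3 : ‖A (EuclideanSpace.basisFun (Fin d) ℝ i)‖ ≤ ‖A‖ := by
          calc ‖A (EuclideanSpace.basisFun (Fin d) ℝ i)‖
              ≤ ‖A‖ * ‖EuclideanSpace.basisFun (Fin d) ℝ i‖ := A.le_opNorm _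
            _ = ‖A‖ := by rw [h2, mul_one]
        calc ‖⟪EuclideanSpace.basisFun (Fin d) ℝ i,
            A (EuclideanSpace.basisFun (Fin d) ℝ i)⟫‖
            ≤ 1 * ‖A (EuclideanSpace.basisFun (Fin d) ℝ i)‖ := by rw [← h2]; exact h1
          _ ≤ ‖A‖ := by rw [one_mul]; exact h3
    _ = (d : ℝ) * ‖A‖ := by
        rw [Finset.sum_const, Finset.card_univ, Fintype.card_fin, nsmul_eq_mul]

/-- Integration by parts on `ℝᵈ`: the integral of a directional derivative of a `C¹`
compactly supported function vanishes. -/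
lemma integral_fderiv_apply_eq_zero {d : ℕ} (u : EuclideanSpace ℝ (Fin d) → ℂ)
    (hu : ContDiff ℝ 1 u) (hcs : HasCompactSupport u) (v : EuclideanSpace ℝ (Fin d)) :
    ∫ x, fderiv ℝ u x v = 0 := by
  obtain ⟨C, hC⟩ := (hu.continuous_fderiv one_ne_zero).bounded_above_of_compact_support (hcs.fderiv (𝕜 := ℝ))
  have hC0 : 0 ≤ C := le_trans (norm_nonneg (fderiv ℝ u 0)) (hC 0)
  set Kset : Set (EuclideanSpace ℝ (Fin d)) :=
    Metric.cthickening (‖v‖ + 1) (tsupport u) with hKset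
  have hKcomp : IsCompact Kset := hcs.cthickening
  have hKmeas : MeasurableSet Kset := hKcomp.isClosed.measurableSet
  have hder : ∀ (t : ℝ) (x : EuclideanSpace ℝ (Fin d)),
      HasDerivAt (fun s => u (x + s • v)) (fderiv ℝ u (x + t • v) v) t := by
    intro t x
    have h0 : HasDerivAt (fun s : ℝ => s • v) ((1:ℝ) • v) t :=
      (hasDerivAt_id t).smul_const v
    have h1 : HasDerivAt (fun s : ℝ => x + s • v) v t := by
      simpa using h0.const_add x
    exact ((hu.differentiable one_ne_zero _).hasFDerivAt.comp_hasDerivAt t h1)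
  have hfz : ∀ z, z ∉ tsupport u → fderiv ℝ u z = 0 := by
    intro z hz
    by_contra h
    exact hz (support_fderiv_subset (𝕜 := ℝ) (by simpa [Function.mem_support] using h))
  have h_bound : ∀ x : EuclideanSpace ℝ (Fin d), ∀ t ∈ Metric.ball (0:ℝ) 1,
      ‖fderiv ℝ u (x + t • v) v‖ ≤ Kset.indicator (fun _ => C * ‖v‖) x := by
    intro x t ht
    rcases em (x ∈ Kset) with hx | hx
    · rw [Set.indicator_of_mem hx]
      calc ‖fderiv ℝ u (x + t • v) v‖ ≤ ‖fderiv ℝ u (x + t • v)‖ * ‖v‖ :=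
            (fderiv ℝ u (x + t • v)).le_opNorm v
        _ ≤ C * ‖v‖ := mul_le_mul_of_nonneg_right (hC _) (norm_nonneg v)
    · rw [Set.indicator_of_notMem hx]
      have hxt : x + t • v ∉ tsupport u := by
        intro hmem
        apply hx
        rw [hKset]
        apply Metric.mem_cthickening_of_dist_le x (x + t • v) _ _ hmem
        rw [dist_eq_norm]
        have hxx : x - (x + t • v) = -(t • v) := by abel
        rw [hxx, norm_neg, norm_smul, Real.norm_eq_abs]
        have : |t| ≤ 1 := by
          rw [Metric.mem_ball, dist_zero_right, Real.norm_eq_abs] at ht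
          exact ht.le
        nlinarith [norm_nonneg v, abs_nonneg t]
      rw [hfz _ hxt]
      simp
  have hint : Integrable (Kset.indicator (fun _ => C * ‖v‖)) volume := by
    rw [integrable_indicator_iff hKmeas]
    exact integrableOn_const hKcomp.measure_lt_top.ne
  have hmain := hasDerivAt_integral_of_dominated_loc_of_deriv_le
    (F := fun (t : ℝ) (x : EuclideanSpace ℝ (Fin d)) => u (x + t • v))
    (F' := fun (t : ℝ) (x : EuclideanSpace ℝ (Fin d)) => fderiv ℝ u (x + t • v) v)
    (x₀ := (0:ℝ)) (bound := Kset.indicator (fun _ => C * ‖v‖)) (Metric.ball_mem_nhds (0:ℝ) one_pos)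
    (Filter.Eventually.of_forall fun t =>
      (hu.continuous.comp (continuous_id.add continuous_const)).aestronglyMeasurable)
    ((hu.continuous.integrable_of_hasCompactSupport hcs).comp_add_right ((0:ℝ) • v))
    (((hu.continuous_fderiv one_ne_zero).clm_apply continuous_const).comp
      (continuous_id.add continuous_const) |>.aestronglyMeasurable)
    (Filter.Eventually.of_forall fun x => h_bound x) hint
    (Filter.Eventually.of_forall fun x t ht => hder t x)
  have hconst : (fun t : ℝ => ∫ x, u (x + t • v)) = fun _ => ∫ x, u x := by
    funext t
    exact integral_add_right_eq_self u (t • v)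
  have h2 : HasDerivAt (fun t : ℝ => ∫ x, u (x + t • v)) 0 0 := by
    rw [hconst]; exact hasDerivAt_const 0 _
  have h3 := (hmain.2).unique h2
  have h4 : (fun x => fderiv ℝ u (x + (0:ℝ) • v) v) = fun x => fderiv ℝ u x v := by
    funext x; simp
  rw [← h4] at *
  exact h3


lemma one_le_top' : (1 : WithTop ℕ∞) ≤ ((⊤:ℕ∞) : WithTop ℕ∞) := by exact_mod_cast le_top

lemma fderiv_exp_mul_apply {d : ℕ} (K : ℝ) (f w : EuclideanSpace ℝ (Fin d) → ℝ)
    (hf : Differentiable ℝ f) (hw : Differentiable ℝ w) (x v : EuclideanSpace ℝ (Fin d)) :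
    fderiv ℝ (fun y => Complex.exp (Complex.I * K * (f y : ℂ)) * ((w y : ℝ) : ℂ)) x v =
      Complex.exp (Complex.I * K * (f x : ℂ)) *
        (((fderiv ℝ w x v : ℝ) : ℂ) +
          Complex.I * K * ((fderiv ℝ f x v : ℝ) : ℂ) * ((w x : ℝ) : ℂ)) := by
  have h0 : HasFDerivAt (fun y => ((f y : ℝ) : ℂ)) (Complex.ofRealCLM.comp (fderiv ℝ f x)) x :=
    Complex.ofRealCLM.hasFDerivAt.comp x (hf x).hasFDerivAt
  have h1 : HasFDerivAt (fun y => Complex.I * K * ((f y : ℝ):ℂ))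
      ((Complex.I * K) • (Complex.ofRealCLM.comp (fderiv ℝ f x))) x := h0.const_mul _
  have h2 := h1.cexp
  have h3 : HasFDerivAt (fun y => ((w y : ℝ):ℂ)) (Complex.ofRealCLM.comp (fderiv ℝ w x)) x :=
    Complex.ofRealCLM.hasFDerivAt.comp x (hw x).hasFDerivAt
  have h4 : HasFDerivAt (fun y => Complex.exp (Complex.I * K * (f y : ℂ)) * ((w y : ℝ) : ℂ)) _ x :=
    h2.mul h3
  rw [h4.fderiv]
  simp only [ContinuousLinearMap.add_apply, ContinuousLinearMap.smul_apply,
    ContinuousLinearMap.coe_comp', Function.comp_apply, Complex.ofRealCLM_apply,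
    smul_eq_mul]
  ring

lemma ibp_step {d : ℕ} (K : ℝ) (f : EuclideanSpace ℝ (Fin d) → ℝ)
    (hf : ContDiff ℝ (⊤:ℕ∞) f) (p : EuclideanSpace ℝ (Fin d) → ℝ)
    (hp : ContDiff ℝ (⊤:ℕ∞) p) (hps : HasCompactSupport p)
    (V : EuclideanSpace ℝ (Fin d) → EuclideanSpace ℝ (Fin d)) (hV : ContDiff ℝ (⊤:ℕ∞) V)
    (hval : ∀ x, p x ≠ 0 → fderiv ℝ f x (V x) = 1) :
    (Complex.I * K) * ∫ x, Complex.exp (Complex.I * K * (f x:ℂ)) * ((p x : ℝ) : ℂ)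
      = - ∫ x, Complex.exp (Complex.I * K * (f x:ℂ)) *
          ((trCLM d (fderiv ℝ (fun y => p y • V y) x) : ℝ) : ℂ) := by
  classical
  set b := EuclideanSpace.basisFun (Fin d) ℝ with hb
  set W : EuclideanSpace ℝ (Fin d) → EuclideanSpace ℝ (Fin d) := fun y => p y • V y with hWdef
  have hWc : ContDiff ℝ (⊤:ℕ∞) W := hp.smul hV
  have hWs : HasCompactSupport W := by
    apply hps.mono
    intro x hx
    simp only [Function.mem_support] at hx ⊢
    intro h
    apply hx
    rw [hWdef]
    simp [h]
  have hWd : Differentiable ℝ W := hWc.differentiable (by simp)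
  have hfd : Differentiable ℝ f := hf.differentiable (by simp)
  have hpd : Differentiable ℝ p := hp.differentiable (by simp)
  -- the scalar coordinate functions
  set w : Fin d → EuclideanSpace ℝ (Fin d) → ℝ := fun i y => ⟪b i, W y⟫ with hwdef
  have hwc : ∀ i, ContDiff ℝ (⊤:ℕ∞) (w i) := fun i => (ContDiff.inner (𝕜 := ℝ) contDiff_const hWc)
  have hwd : ∀ i, Differentiable ℝ (w i) := fun i => (hwc i).differentiable (by simp)
  have hwfd : ∀ i x, fderiv ℝ (w i) x = (innerSL ℝ (b i)).comp (fderiv ℝ W x) := by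
    intro i x
    have : HasFDerivAt (w i) ((innerSL ℝ (b i)).comp (fderiv ℝ W x)) x :=
      ((innerSL ℝ (b i)).hasFDerivAt.comp x (hWd x).hasFDerivAt)
    exact this.fderiv
  -- the functions to which we apply integration by parts
  set u : Fin d → EuclideanSpace ℝ (Fin d) → ℂ :=
    fun i x => Complex.exp (Complex.I * K * (f x:ℂ)) * ((w i x : ℝ) : ℂ) with hudef
  have huc : ∀ i, ContDiff ℝ (⊤:ℕ∞) (u i) := by
    intro i
    apply ContDiff.mul
    · have : ContDiff ℝ (⊤:ℕ∞) (fun y => Complex.I * K * (f y:ℂ)) :=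
        contDiff_const.mul (Complex.ofRealCLM.contDiff.comp hf)
      exact (Complex.contDiff_exp (𝕜 := ℝ)).comp this
    · exact Complex.ofRealCLM.contDiff.comp (hwc i)
  have hus : ∀ i, HasCompactSupport (u i) := by
    intro i
    apply hWs.mono
    intro x hx
    simp only [Function.mem_support] at hx ⊢
    intro h
    apply hx
    rw [hudef]
    simp [hwdef, h]
  have hibp : ∀ i : Fin d, (∫ x, fderiv ℝ (u i) x (b i)) = 0 := fun i =>
    integral_fderiv_apply_eq_zero (u i) ((huc i).of_le one_le_top') (hus i) (b i)
  -- pointwise identity for the sum of directional derivatives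
  have key : ∀ x, ∑ i : Fin d, fderiv ℝ (u i) x (b i) =
      Complex.exp (Complex.I * K * (f x:ℂ)) *
        ((trCLM d (fderiv ℝ W x) : ℝ) : ℂ)
      + Complex.I * K * (Complex.exp (Complex.I * K * (f x:ℂ)) * ((p x : ℝ) : ℂ)) := by
    intro x
    have h1 : ∀ i : Fin d, fderiv ℝ (u i) x (b i) =
        Complex.exp (Complex.I * K * (f x : ℂ)) *
          (((fderiv ℝ (w i) x (b i) : ℝ) : ℂ) +
            Complex.I * K * ((fderiv ℝ f x (b i) : ℝ) : ℂ) * ((w i x : ℝ) : ℂ)) := by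
      intro i
      exact fderiv_exp_mul_apply K f (w i) hfd (hwd i) x (b i)
    rw [Finset.sum_congr rfl (fun i _ => h1 i), ← Finset.mul_sum]
    have h2 : (∑ i : Fin d, (((fderiv ℝ (w i) x (b i) : ℝ) : ℂ) +
        Complex.I * K * ((fderiv ℝ f x (b i) : ℝ) : ℂ) * ((w i x : ℝ) : ℂ))) =
        ((trCLM d (fderiv ℝ W x) : ℝ) : ℂ) + Complex.I * K * ((p x : ℝ) : ℂ) := by
      rw [Finset.sum_add_distrib]
      congr 1
      · rw [trCLM_apply, Complex.ofReal_sum]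
        apply Finset.sum_congr rfl
        intro i _
        rw [hwfd i x]
        simp only [ContinuousLinearMap.coe_comp', Function.comp_apply, innerSL_apply_apply, hb]
      · -- ∑ i, I K (df (b i)) (w i x) = I K (df (W x)) = I K p x
        have h3 : (∑ i : Fin d, fderiv ℝ f x (b i) * w i x) = fderiv ℝ f x (W x) := by
          have h4 : W x = ∑ i : Fin d, w i x • b i := by
            conv_lhs => rw [← b.sum_repr (W x)]
            apply Finset.sum_congr rfl
            intro i _
            congr 1
            exact b.repr_apply_apply (W x) i
          conv_rhs => rw [h4, map_sum]
          apply Finset.sum_congr rfl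
          intro i _
          rw [ContinuousLinearMap.map_smul, smul_eq_mul, mul_comm]
        have h5 : fderiv ℝ f x (W x) = p x := by
          rcases eq_or_ne (p x) 0 with hpx | hpx
          · show fderiv ℝ f x (p x • V x) = p x
            rw [hpx]; simp
          · show fderiv ℝ f x (p x • V x) = p x
            rw [ContinuousLinearMap.map_smul, smul_eq_mul, hval x hpx, mul_one]
        have h6 : ∀ i : Fin d, Complex.I * (K:ℂ) * ((fderiv ℝ f x (b i) : ℝ):ℂ) * ((w i x : ℝ):ℂ)
            = Complex.I * (K:ℂ) * (((fderiv ℝ f x (b i) * w i x : ℝ)) : ℂ) := by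
          intro i; rw [Complex.ofReal_mul]; ring
        rw [Finset.sum_congr rfl (fun i _ => h6 i), ← Finset.mul_sum, ← Complex.ofReal_sum, h3, h5]
    rw [h2]
    ring
  -- integrability of the two pieces
  have hexp_cont : Continuous (fun x => Complex.exp (Complex.I * K * (f x:ℂ))) := by
    have : Continuous (fun y => Complex.I * K * (f y:ℂ)) :=
      continuous_const.mul (Complex.continuous_ofReal.comp hf.continuous)
    exact Complex.continuous_exp.comp this
  have hint1 : Integrable (fun x => Complex.exp (Complex.I * K * (f x:ℂ)) * ((p x : ℝ) : ℂ)) := by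
    apply Continuous.integrable_of_hasCompactSupport
    · exact hexp_cont.mul (Complex.continuous_ofReal.comp hp.continuous)
    · apply hps.mono
      intro x hx
      simp only [Function.mem_support] at hx ⊢
      intro h; apply hx; simp [h]
  have hq_cont : Continuous (fun x => ((trCLM d (fderiv ℝ W x) : ℝ) : ℂ)) := by
    refine Complex.continuous_ofReal.comp ?_
    exact (trCLM d).continuous.comp (hWc.continuous_fderiv (by simp))
  have hq_supp : HasCompactSupport (fun x => ((trCLM d (fderiv ℝ W x) : ℝ) : ℂ)) := by
    apply (hWs.fderiv (𝕜 := ℝ)).mono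
    intro x hx
    simp only [Function.mem_support] at hx ⊢
    intro h; apply hx; rw [h]; simp
  have hint2 : Integrable (fun x => Complex.exp (Complex.I * K * (f x:ℂ)) *
      ((trCLM d (fderiv ℝ W x) : ℝ) : ℂ)) := by
    apply Continuous.integrable_of_hasCompactSupport
    · exact hexp_cont.mul hq_cont
    · apply hq_supp.mono
      intro x hx
      simp only [Function.mem_support] at hx ⊢
      intro h; apply hx; simp [h]
  -- put everything together
  have hsum : (∫ x, ∑ i : Fin d, fderiv ℝ (u i) x (b i)) = 0 := by
    rw [integral_finset_sum]
    · exact Finset.sum_eq_zero fun i _ => hibp i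
    · intro i _
      apply Continuous.integrable_of_hasCompactSupport
      · exact (((huc i).continuous_fderiv (by simp)).clm_apply continuous_const)
      · apply ((hus i).fderiv (𝕜 := ℝ)).mono
        intro x hx
        simp only [Function.mem_support] at hx ⊢
        intro h; apply hx; rw [h]; simp
  rw [MeasureTheory.integral_congr_ae (Filter.Eventually.of_forall key)] at hsum
  rw [MeasureTheory.integral_add hint2] at hsum
  · rw [MeasureTheory.integral_const_mul] at hsum
    linear_combination hsum
  · exact hint1.const_mul _

lemma topadd : ((⊤:ℕ∞) : WithTop ℕ∞) + 1 ≤ ((⊤:ℕ∞) : WithTop ℕ∞) := by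
  have : ((⊤:ℕ∞) : WithTop ℕ∞) + 1 = ((⊤:ℕ∞) : WithTop ℕ∞) := by
    exact_mod_cast (by simp : (⊤:ℕ∞) + 1 = ⊤)
  rw [this]

/-- The sequence of amplitudes produced by repeated integration by parts. -/
def seqP (d : ℕ) (V : EuclideanSpace ℝ (Fin d) → EuclideanSpace ℝ (Fin d))
    (g : EuclideanSpace ℝ (Fin d) → ℝ) : ℕ → EuclideanSpace ℝ (Fin d) → ℝ
  | 0 => g
  | l+1 => fun x => trCLM d (fderiv ℝ (fun y => seqP d V g l y • V y) x)

lemma seqP_contDiff {d : ℕ} {V : EuclideanSpace ℝ (Fin d) → EuclideanSpace ℝ (Fin d)}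
    {g : EuclideanSpace ℝ (Fin d) → ℝ} (hV : ContDiff ℝ (⊤:ℕ∞) V)
    (hg : ContDiff ℝ (⊤:ℕ∞) g) : ∀ l, ContDiff ℝ (⊤:ℕ∞) (seqP d V g l) := by
  intro l
  induction l with
  | zero => exact hg
  | succ l ih =>
      show ContDiff ℝ (⊤:ℕ∞) fun x => trCLM d (fderiv ℝ (fun y => seqP d V g l y • V y) x)
      exact (trCLM d).contDiff.comp ((ih.smul hV).fderiv_right topadd)

lemma seqP_tsupport {d : ℕ} (V : EuclideanSpace ℝ (Fin d) → EuclideanSpace ℝ (Fin d))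
    (g : EuclideanSpace ℝ (Fin d) → ℝ) : ∀ l, tsupport (seqP d V g l) ⊆ tsupport g := by
  intro l
  induction l with
  | zero => exact subset_rfl
  | succ l ih =>
      refine subset_trans ?_ ih
      apply closure_minimal ?_ (isClosed_tsupport _)
      intro x hx
      simp only [Function.mem_support] at hx
      have h1 : fderiv ℝ (fun y => seqP d V g l y • V y) x ≠ 0 := by
        intro h
        apply hx
        show trCLM d (fderiv ℝ (fun y => seqP d V g l y • V y) x) = 0
        rw [h]; simp
      have h2 : x ∈ tsupport (fun y => seqP d V g l y • V y) :=
        support_fderiv_subset (𝕜 := ℝ) (by simpa [Function.mem_support] using h1)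
      refine closure_mono ?_ h2
      intro y hy
      simp only [Function.mem_support] at hy ⊢
      intro h
      apply hy
      simp [h]

lemma seqP_hasCompactSupport {d : ℕ}
    {V : EuclideanSpace ℝ (Fin d) → EuclideanSpace ℝ (Fin d)}
    {g : EuclideanSpace ℝ (Fin d) → ℝ} (hg : HasCompactSupport g) (l : ℕ) :
    HasCompactSupport (seqP d V g l) :=
  IsCompact.of_isClosed_subset hg (isClosed_tsupport _) (seqP_tsupport V g l)

/-- The combinatorial constants of the recursion. -/
def Mc (d : ℕ) (Vb : ℕ → ℝ) : ℕ → ℕ → ℝ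
  | 0, _ => 1
  | l+1, m => d * ∑ a ∈ Finset.range (m+2), ((m+1).choose a : ℝ) * Mc d Vb l a * Vb (m+1-a)

lemma Mc_nonneg (d : ℕ) (Vb : ℕ → ℝ) (h : ∀ m, 0 ≤ Vb m) : ∀ l m, 0 ≤ Mc d Vb l m := by
  intro l
  induction l with
  | zero => intro m; exact zero_le_one
  | succ l ih =>
      intro m
      show (0:ℝ) ≤ d * ∑ a ∈ Finset.range (m+2), ((m+1).choose a : ℝ) * Mc d Vb l a * Vb (m+1-a)
      apply mul_nonneg (Nat.cast_nonneg d)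
      apply Finset.sum_nonneg
      intro a _
      exact mul_nonneg (mul_nonneg (Nat.cast_nonneg _) (ih a)) (h _)

lemma seqP_bound {d : ℕ} {V : EuclideanSpace ℝ (Fin d) → EuclideanSpace ℝ (Fin d)}
    {g : EuclideanSpace ℝ (Fin d) → ℝ} (hV : ContDiff ℝ (⊤:ℕ∞) V)
    (hg : ContDiff ℝ (⊤:ℕ∞) g) (L : ℕ) (ε : ℝ) (hε : 0 < ε)
    (Vb : ℕ → ℝ) (hVb0 : ∀ m, 0 ≤ Vb m)
    (hVb : ∀ m, m ≤ L → ∀ x ∈ tsupport g, ‖iteratedFDeriv ℝ m V x‖ * ε ^ m ≤ Vb m) :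
    ∀ l m, l + m ≤ L → ∀ x, ‖iteratedFDeriv ℝ m (seqP d V g l) x‖ * ε ^ (l + m)
      ≤ Mc d Vb l m * ∑ j ∈ Finset.range (l + m + 1), ε ^ j * ‖iteratedFDeriv ℝ j g x‖ := by
  intro l
  induction l with
  | zero =>
      intro m _ x
      show ‖iteratedFDeriv ℝ m g x‖ * ε ^ (0 + m) ≤
        (1:ℝ) * ∑ j ∈ Finset.range (0 + m + 1), ε ^ j * ‖iteratedFDeriv ℝ j g x‖
      rw [one_mul, zero_add]
      have hm : m ∈ Finset.range (m + 1) := Finset.self_mem_range_succ m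
      calc ‖iteratedFDeriv ℝ m g x‖ * ε ^ m = ε ^ m * ‖iteratedFDeriv ℝ m g x‖ := mul_comm _ _
        _ ≤ ∑ j ∈ Finset.range (m + 1), ε ^ j * ‖iteratedFDeriv ℝ j g x‖ :=
            Finset.single_le_sum (f := fun j => ε ^ j * ‖iteratedFDeriv ℝ j g x‖)
              (fun j _ => by positivity) hm
  | succ l ih =>
      intro m hlm x
      have hMc0 := Mc_nonneg d Vb hVb0
      have hS0 : (0:ℝ) ≤ ∑ j ∈ Finset.range (l + 1 + m + 1), ε ^ j * ‖iteratedFDeriv ℝ j g x‖ :=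
        Finset.sum_nonneg fun j _ => by positivity
      rcases em (x ∈ tsupport g) with hx | hx
      swap
      · -- outside the support everything vanishes
        have hxP : x ∉ tsupport (seqP d V g (l+1)) := fun h => hx (seqP_tsupport V g (l+1) h)
        have hzero : iteratedFDeriv ℝ m (seqP d V g (l+1)) x = 0 := by
          by_contra h
          exact hxP (tsupport_iteratedFDeriv_subset m
            (subset_closure (by simpa [Function.mem_support] using h)))
        rw [hzero]
        simp only [norm_zero, zero_mul]
        exact mul_nonneg (hMc0 _ _) hS0
      · -- the main estimate
        set P := seqP d V g l with hP
        set W : EuclideanSpace ℝ (Fin d) → EuclideanSpace ℝ (Fin d) :=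
          fun y => P y • V y with hW
        have hPc : ContDiff ℝ (⊤:ℕ∞) P := seqP_contDiff hV hg l
        have hWc : ContDiff ℝ (⊤:ℕ∞) W := hPc.smul hV
        -- step 1: ∇^m of the divergence is controlled by ∇^{m+1} W
        have step1 : ‖iteratedFDeriv ℝ m (seqP d V g (l+1)) x‖ ≤
            (d:ℝ) * ‖iteratedFDeriv ℝ (m+1) W x‖ := by
          have hcomp : iteratedFDeriv ℝ m (seqP d V g (l+1)) x =
              (trCLM d).compContinuousMultilinearMap (iteratedFDeriv ℝ m (fderiv ℝ W) x) := by
            have : seqP d V g (l+1) = (trCLM d) ∘ (fderiv ℝ W) := rfl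
            rw [this]
            exact (trCLM d).iteratedFDeriv_comp_left (hWc.fderiv_right topadd).contDiffAt
              (by exact_mod_cast le_top)
          rw [hcomp]
          calc ‖(trCLM d).compContinuousMultilinearMap (iteratedFDeriv ℝ m (fderiv ℝ W) x)‖
              ≤ ‖trCLM d‖ * ‖iteratedFDeriv ℝ m (fderiv ℝ W) x‖ :=
                ContinuousLinearMap.norm_compContinuousMultilinearMap_le _ _
            _ ≤ (d:ℝ) * ‖iteratedFDeriv ℝ (m+1) W x‖ := by
                rw [norm_iteratedFDeriv_fderiv]
                exact mul_le_mul_of_nonneg_right (trCLM_norm d) (norm_nonneg _)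
        -- step 2: Leibniz
        have step2 : ‖iteratedFDeriv ℝ (m+1) W x‖ ≤
            ∑ i ∈ Finset.range (m+2), ((m+1).choose i : ℝ) *
              ‖iteratedFDeriv ℝ i P x‖ * ‖iteratedFDeriv ℝ (m+1-i) V x‖ := by
          have := norm_iteratedFDeriv_smul_le hPc hV x
            (n := m+1) (by exact_mod_cast le_top)
          exact this
        -- put the powers of ε in
        have hsplit : ∀ i, i ∈ Finset.range (m+2) →
            ε ^ (l + 1 + m) = ε ^ (l + i) * ε ^ (m + 1 - i) := by
          intro i hi
          rw [← pow_add]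
          congr 1
          have : i ≤ m + 1 := by
            simp only [Finset.mem_range] at hi
            omega
          omega
        calc ‖iteratedFDeriv ℝ m (seqP d V g (l+1)) x‖ * ε ^ (l + 1 + m)
            ≤ ((d:ℝ) * ‖iteratedFDeriv ℝ (m+1) W x‖) * ε ^ (l + 1 + m) := by
              apply mul_le_mul_of_nonneg_right step1 (by positivity)
          _ ≤ (d:ℝ) * ((∑ i ∈ Finset.range (m+2), ((m+1).choose i : ℝ) *
              ‖iteratedFDeriv ℝ i P x‖ * ‖iteratedFDeriv ℝ (m+1-i) V x‖) * ε ^ (l + 1 + m)) := by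
              rw [mul_assoc]
              apply mul_le_mul_of_nonneg_left ?_ (Nat.cast_nonneg d)
              apply mul_le_mul_of_nonneg_right step2 (by positivity)
          _ = (d:ℝ) * ∑ i ∈ Finset.range (m+2), ((m+1).choose i : ℝ) *
              (‖iteratedFDeriv ℝ i P x‖ * ε ^ (l + i)) *
              (‖iteratedFDeriv ℝ (m+1-i) V x‖ * ε ^ (m + 1 - i)) := by
              rw [Finset.sum_mul]
              congr 1
              apply Finset.sum_congr rfl
              intro i hi
              rw [hsplit i hi]
              ring
          _ ≤ (d:ℝ) * ∑ i ∈ Finset.range (m+2), ((m+1).choose i : ℝ) *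
              (Mc d Vb l i * ∑ j ∈ Finset.range (l + 1 + m + 1),
                ε ^ j * ‖iteratedFDeriv ℝ j g x‖) * Vb (m+1-i) := by
              apply mul_le_mul_of_nonneg_left ?_ (Nat.cast_nonneg d)
              apply Finset.sum_le_sum
              intro i hi
              simp only [Finset.mem_range] at hi
              have hi' : i ≤ m + 1 := by omega
              have h1 : ‖iteratedFDeriv ℝ i P x‖ * ε ^ (l + i) ≤
                  Mc d Vb l i * ∑ j ∈ Finset.range (l + i + 1),
                    ε ^ j * ‖iteratedFDeriv ℝ j g x‖ :=
                ih i (by omega) x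
              have h2 : (∑ j ∈ Finset.range (l + i + 1), ε ^ j * ‖iteratedFDeriv ℝ j g x‖)
                  ≤ ∑ j ∈ Finset.range (l + 1 + m + 1), ε ^ j * ‖iteratedFDeriv ℝ j g x‖ := by
                apply Finset.sum_le_sum_of_subset_of_nonneg
                · apply Finset.range_subset_range.2; omega
                · intro j _ _; positivity
              have h3 : ‖iteratedFDeriv ℝ (m+1-i) V x‖ * ε ^ (m+1-i) ≤ Vb (m+1-i) :=
                hVb (m+1-i) (by omega) x hx
              calc ((m+1).choose i : ℝ) *
                  (‖iteratedFDeriv ℝ i P x‖ * ε ^ (l + i)) *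
                  (‖iteratedFDeriv ℝ (m+1-i) V x‖ * ε ^ (m + 1 - i))
                  ≤ ((m+1).choose i : ℝ) *
                    (Mc d Vb l i * ∑ j ∈ Finset.range (l + i + 1),
                      ε ^ j * ‖iteratedFDeriv ℝ j g x‖) * Vb (m+1-i) := by
                    apply mul_le_mul
                    · exact mul_le_mul_of_nonneg_left h1 (Nat.cast_nonneg _)
                    · exact h3
                    · positivity
                    · apply mul_nonneg (Nat.cast_nonneg _)
                      exact mul_nonneg (hMc0 _ _) (Finset.sum_nonneg fun j _ => by positivity)
                _ ≤ ((m+1).choose i : ℝ) *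
                    (Mc d Vb l i * ∑ j ∈ Finset.range (l + 1 + m + 1),
                      ε ^ j * ‖iteratedFDeriv ℝ j g x‖) * Vb (m+1-i) := by
                    apply mul_le_mul_of_nonneg_right ?_ (hVb0 _)
                    apply mul_le_mul_of_nonneg_left ?_ (Nat.cast_nonneg _)
                    exact mul_le_mul_of_nonneg_left h2 (hMc0 _ _)
          _ = Mc d Vb (l+1) m * ∑ j ∈ Finset.range (l + 1 + m + 1),
              ε ^ j * ‖iteratedFDeriv ℝ j g x‖ := by
              show (d:ℝ) * ∑ i ∈ Finset.range (m+2), _ =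
                ((d:ℝ) * ∑ a ∈ Finset.range (m+2), ((m+1).choose a : ℝ) *
                  Mc d Vb l a * Vb (m+1-a)) * _
              rw [mul_assoc]
              congr 1
              rw [Finset.sum_mul]
              apply Finset.sum_congr rfl
              intro i _
              ring


lemma gradient_eq_comp {d : ℕ} (f : EuclideanSpace ℝ (Fin d) → ℝ) :
    gradient f = ⇑(InnerProductSpace.toDual ℝ (EuclideanSpace ℝ (Fin d))).symm ∘ fderiv ℝ f :=
  rfl

lemma gradient_contDiff {d : ℕ} {f : EuclideanSpace ℝ (Fin d) → ℝ}
    (hf : ContDiff ℝ (⊤:ℕ∞) f) : ContDiff ℝ (⊤:ℕ∞) (gradient f) := by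
  rw [gradient_eq_comp]
  exact (InnerProductSpace.toDual ℝ
    (EuclideanSpace ℝ (Fin d))).symm.contDiff.comp (hf.fderiv_right topadd)

lemma gradient_iteratedFDeriv_norm {d : ℕ} (f : EuclideanSpace ℝ (Fin d) → ℝ)
    (n : ℕ) (x : EuclideanSpace ℝ (Fin d)) :
    ‖iteratedFDeriv ℝ n (gradient f) x‖ = ‖iteratedFDeriv ℝ (n+1) f x‖ := by
  rw [gradient_eq_comp,
    (InnerProductSpace.toDual ℝ
      (EuclideanSpace ℝ (Fin d))).symm.norm_iteratedFDeriv_comp_left (fderiv ℝ f) x n,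
    norm_iteratedFDeriv_fderiv]

lemma gradient_norm_eq {d : ℕ} (f : EuclideanSpace ℝ (Fin d) → ℝ)
    (x : EuclideanSpace ℝ (Fin d)) : ‖gradient f x‖ = ‖fderiv ℝ f x‖ := by
  rw [gradient_eq_comp]
  exact LinearIsometryEquiv.norm_map _ _

lemma fderiv_gradient_self {d : ℕ} (f : EuclideanSpace ℝ (Fin d) → ℝ)
    (x : EuclideanSpace ℝ (Fin d)) :
    fderiv ℝ f x (gradient f x) = ‖gradient f x‖ ^ 2 := by
  have h := InnerProductSpace.toDual_symm_apply
    (𝕜 := ℝ) (E := EuclideanSpace ℝ (Fin d)) (y := fderiv ℝ f x) (x := gradient f x)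
  rw [← real_inner_self_eq_norm_sq]
  exact h.symm



end NSP

open NSP in
/-- Lemma 6.1 / `int-part`: non-stationary phase:
`|∫ e^{iKf} g| ≲_{d,L} (Kε)^{-L} Σ_{l≤L} ε^l ‖∇^l g‖_{L¹}`. -/
theorem nonstationary_phase (d : ℕ) (hd : 1 ≤ d) (L : ℕ) (hL : 1 ≤ L) (Cf : ℕ → ℝ) :
    ∃ C' : ℝ, 0 < C' ∧
    ∀ K ε : ℝ, 0 < ε → ε ≤ 1 → 1/ε ≤ K →
    ∀ f g : EuclideanSpace ℝ (Fin d) → ℝ,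
      ContDiff ℝ (⊤ : ℕ∞) f → ContDiff ℝ (⊤ : ℕ∞) g → HasCompactSupport g →
      (∀ ξ ∈ tsupport g, 1 ≤ ‖fderiv ℝ f ξ‖) →
      (∀ L' : ℕ, 2 ≤ L' → ∀ ξ ∈ tsupport g,
        ‖iteratedFDeriv ℝ L' f ξ‖ ≤ Cf L' * ε ^ (1 - (L' : ℤ))) →
      ‖∫ ξ, Complex.exp (Complex.I * ((K * f ξ : ℝ) : ℂ)) * ((g ξ : ℝ) : ℂ)‖ ≤
        C' * (K * ε) ^ (-(L : ℤ)) *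
          ∑ l ∈ Finset.range (L + 1), ε ^ l * ∫ ξ, ‖iteratedFDeriv ℝ l g ξ‖ := by
  classical
  obtain ⟨Bf, hBf⟩ : ∃ Bf : ℕ → ℝ, ∀ m, (0 ≤ Bf m ∧
      ∀ y : EuclideanSpace ℝ (Fin d), ‖iteratedFDeriv ℝ m (Gv d) y‖ ≤ Bf m) := by
    choose Bf h1 h2 using Gv_bound d
    exact ⟨Bf, fun m => ⟨h1 m, h2 m⟩⟩
  set BG : ℝ := 1 + ∑ i ∈ Finset.range (L+1), |Bf i| with hBG
  have hBG1 : (1:ℝ) ≤ BG :=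
    le_add_of_nonneg_right (Finset.sum_nonneg fun _ _ => abs_nonneg _)
  have hBGb : ∀ i, i ≤ L → ∀ y : EuclideanSpace ℝ (Fin d),
      ‖iteratedFDeriv ℝ i (Gv d) y‖ ≤ BG := by
    intro i hi y
    calc ‖iteratedFDeriv ℝ i (Gv d) y‖ ≤ Bf i := (hBf i).2 y
      _ ≤ |Bf i| := le_abs_self _
      _ ≤ ∑ j ∈ Finset.range (L+1), |Bf j| :=
          Finset.single_le_sum (f := fun j => |Bf j|) (fun j _ => abs_nonneg _)
            (Finset.mem_range.2 (by omega))
      _ ≤ BG := by rw [hBG]; linarith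
  set A : ℝ := 1 + ∑ i ∈ Finset.range (L+2), |Cf i| with hA
  have hA1 : (1:ℝ) ≤ A :=
    le_add_of_nonneg_right (Finset.sum_nonneg fun _ _ => abs_nonneg _)
  have hA0 : (0:ℝ) < A := lt_of_lt_of_le one_pos hA1
  have hACf : ∀ i, i ≤ L+1 → Cf i ≤ A := by
    intro i hi
    calc Cf i ≤ |Cf i| := le_abs_self _
      _ ≤ ∑ j ∈ Finset.range (L+2), |Cf j| :=
          Finset.single_le_sum (f := fun j => |Cf j|) (fun j _ => abs_nonneg _)
            (Finset.mem_range.2 (by omega))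
      _ ≤ A := by rw [hA]; linarith
  set Vb : ℕ → ℝ := fun m => (m.factorial : ℝ) * BG * A ^ m with hVbdef
  have hVb0 : ∀ m, 0 ≤ Vb m := by
    intro m
    rw [hVbdef]
    have : (0:ℝ) ≤ BG := by linarith
    positivity
  set Cmain : ℝ := Mc d Vb L 0 with hCm
  have hCm0 : 0 ≤ Cmain := Mc_nonneg d Vb hVb0 L 0
  refine ⟨Cmain + 1, by linarith, ?_⟩
  intro K ε hε hε1 hK f g hf hg hgs hlow hhigh
  have hKpos : 0 < K := lt_of_lt_of_le (by positivity) hK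
  set V : EuclideanSpace ℝ (Fin d) → EuclideanSpace ℝ (Fin d) :=
    fun x => Gv d (gradient f x) with hVdef
  have hVc : ContDiff ℝ (⊤:ℕ∞) V := Gv_contDiff.comp (gradient_contDiff hf)
  -- derivative bounds for V on the support of g
  have hVbound : ∀ m, m ≤ L → ∀ x ∈ tsupport g,
      ‖iteratedFDeriv ℝ m V x‖ * ε ^ m ≤ Vb m := by
    intro m hm x hx
    have hεL : (0:ℝ) < ε ^ m := pow_pos hε m
    have hcomp : ‖iteratedFDeriv ℝ m V x‖ ≤ (m.factorial : ℝ) * BG * (A/ε) ^ m := by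
      have hVeq : V = (Gv d) ∘ (gradient f) := rfl
      rw [hVeq]
      apply norm_iteratedFDeriv_comp_le Gv_contDiff (gradient_contDiff hf)
        (by exact_mod_cast le_top) x
      · intro i hi
        exact hBGb i (le_trans hi hm) _
      · intro i hi1 hi2
        rw [gradient_iteratedFDeriv_norm]
        have h2 := hhigh (i+1) (by omega) x hx
        have hzpow : ε ^ (1 - ((i+1:ℕ) : ℤ)) = (ε ^ i)⁻¹ := by
          have : (1 - ((i+1:ℕ) : ℤ)) = -(i:ℤ) := by push_cast; ring
          rw [this, zpow_neg, zpow_natCast]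
        rw [hzpow] at h2
        have hinv : (0:ℝ) ≤ (ε ^ i)⁻¹ := by positivity
        calc ‖iteratedFDeriv ℝ (i+1) f x‖ ≤ Cf (i+1) * (ε ^ i)⁻¹ := h2
          _ ≤ A * (ε ^ i)⁻¹ := mul_le_mul_of_nonneg_right (hACf (i+1) (by omega)) hinv
          _ ≤ A ^ i * (ε ^ i)⁻¹ := mul_le_mul_of_nonneg_right
              (le_self_pow₀ hA1 (by omega)) hinv
          _ = (A/ε) ^ i := by rw [div_pow, div_eq_mul_inv]
    calc ‖iteratedFDeriv ℝ m V x‖ * ε ^ m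
        ≤ ((m.factorial : ℝ) * BG * (A/ε) ^ m) * ε ^ m :=
          mul_le_mul_of_nonneg_right hcomp hεL.le
      _ = Vb m := by
          rw [hVbdef, div_pow, mul_assoc ((m.factorial : ℝ) * BG),
            div_mul_cancel₀ _ (pow_ne_zero m hε.ne')]
  -- the phase is normalized on the supports
  have hval : ∀ l : ℕ, ∀ x, seqP d V g l x ≠ 0 → fderiv ℝ f x (V x) = 1 := by
    intro l x hx
    have hx' : x ∈ tsupport g :=
      seqP_tsupport V g l (subset_closure (Function.mem_support.2 hx))
    have h1 : 1 ≤ ‖gradient f x‖ := by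
      rw [gradient_norm_eq]; exact hlow x hx'
    have h2 : Gv d (gradient f x) = (‖gradient f x‖^2)⁻¹ • gradient f x :=
      Gv_eq (by linarith)
    show fderiv ℝ f x (Gv d (gradient f x)) = 1
    rw [h2, ContinuousLinearMap.map_smul, smul_eq_mul, fderiv_gradient_self]
    have h3 : ‖gradient f x‖^2 ≠ 0 := by nlinarith
    field_simp
  -- one step of integration by parts
  have hstep : ∀ l : ℕ,
      ‖∫ x, Complex.exp (Complex.I * K * (f x:ℂ)) * ((seqP d V g l x : ℝ):ℂ)‖
      = (1/K) * ‖∫ x, Complex.exp (Complex.I * K * (f x:ℂ)) *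
          ((seqP d V g (l+1) x : ℝ):ℂ)‖ := by
    intro l
    have h : (Complex.I * K) * ∫ x, Complex.exp (Complex.I * K * (f x:ℂ)) *
          ((seqP d V g l x : ℝ):ℂ)
        = - ∫ x, Complex.exp (Complex.I * K * (f x:ℂ)) * ((seqP d V g (l+1) x : ℝ):ℂ) :=
      ibp_step K f hf (seqP d V g l) (seqP_contDiff hVc hg l)
        (seqP_hasCompactSupport hgs l) V hVc (fun x hx => hval l x hx)
    have hne : (Complex.I * K) ≠ 0 := by
      simp [Complex.ext_iff, hKpos.ne']
    have h2 : (∫ x, Complex.exp (Complex.I * K * (f x:ℂ)) * ((seqP d V g l x : ℝ):ℂ))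
        = (Complex.I * K)⁻¹ *
          -(∫ x, Complex.exp (Complex.I * K * (f x:ℂ)) * ((seqP d V g (l+1) x : ℝ):ℂ)) := by
      rw [← h, ← mul_assoc, inv_mul_cancel₀ hne, one_mul]
    rw [h2, norm_mul, norm_neg, norm_inv]
    congr 1
    rw [norm_mul, Complex.norm_I, one_mul, Complex.norm_real, Real.norm_eq_abs,
      abs_of_pos hKpos, one_div]
  -- iterate
  have hiter : ∀ n : ℕ,
      ‖∫ x, Complex.exp (Complex.I * K * (f x:ℂ)) * ((g x : ℝ):ℂ)‖
      = (1/K)^n * ‖∫ x, Complex.exp (Complex.I * K * (f x:ℂ)) *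
          ((seqP d V g n x : ℝ):ℂ)‖ := by
    intro n
    induction n with
    | zero => simp [seqP]
    | succ n ih => rw [ih, hstep n, pow_succ]; ring
  -- bound the last integral by the L¹ norm
  set PL : EuclideanSpace ℝ (Fin d) → ℝ := seqP d V g L with hPL
  have hPLc : Continuous PL := (seqP_contDiff hVc hg L).continuous
  have hPLs : HasCompactSupport PL := seqP_hasCompactSupport hgs L
  have hintPL : Integrable (fun x => |PL x|) :=
    (hPLc.abs.integrable_of_hasCompactSupport (hPLs.abs))
  have hIL : ‖∫ x, Complex.exp (Complex.I * K * (f x:ℂ)) * ((PL x : ℝ):ℂ)‖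
      ≤ ∫ x, |PL x| := by
    refine le_trans (norm_integral_le_integral_norm _) ?_
    apply le_of_eq
    apply MeasureTheory.integral_congr_ae
    apply Filter.Eventually.of_forall
    intro x
    show ‖Complex.exp (Complex.I * K * (f x:ℂ)) * ((PL x : ℝ):ℂ)‖ = |PL x|
    rw [norm_mul, Complex.norm_real, Real.norm_eq_abs]
    have hexp1 : ‖Complex.exp (Complex.I * K * (f x:ℂ))‖ = 1 := by
      rw [Complex.norm_exp]
      have : (Complex.I * K * (f x:ℂ)).re = 0 := by simp
      rw [this, Real.exp_zero]
    rw [hexp1, one_mul]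
  -- pointwise bound for P L
  have hpt : ∀ x, |PL x| * ε^L ≤
      Cmain * ∑ j ∈ Finset.range (L+1), ε^j * ‖iteratedFDeriv ℝ j g x‖ := by
    intro x
    have h := seqP_bound hVc hg L ε hε Vb hVb0 hVbound L 0 (by omega) x
    rw [norm_iteratedFDeriv_zero] at h
    simpa [Real.norm_eq_abs] using h
  -- integrability of iterated derivatives of g
  have hintg : ∀ j : ℕ, Integrable (fun x => ‖iteratedFDeriv ℝ j g x‖) := by
    intro j
    apply Continuous.integrable_of_hasCompactSupport
    · exact (hg.continuous_iteratedFDeriv (by exact_mod_cast le_top)).norm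
    · apply IsCompact.of_isClosed_subset hgs (isClosed_tsupport _)
      apply closure_minimal ?_ (isClosed_tsupport g)
      intro x hx
      simp only [Function.mem_support, norm_ne_zero_iff] at hx
      exact tsupport_iteratedFDeriv_subset j (subset_closure
        (Function.mem_support.2 hx))
  have hintS : Integrable (fun x => (Cmain / ε^L) *
      ∑ j ∈ Finset.range (L+1), ε^j * ‖iteratedFDeriv ℝ j g x‖) := by
    apply Integrable.const_mul
    apply MeasureTheory.integrable_finset_sum
    intro j _
    exact (hintg j).const_mul _
  have hSint : (∫ x, |PL x|) ≤ (Cmain / ε^L) *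
      ∑ j ∈ Finset.range (L+1), ε^j * ∫ x, ‖iteratedFDeriv ℝ j g x‖ := by
    have h1 : ∀ x, |PL x| ≤ (Cmain / ε^L) *
        ∑ j ∈ Finset.range (L+1), ε^j * ‖iteratedFDeriv ℝ j g x‖ := by
      intro x
      rw [div_mul_eq_mul_div, le_div_iff₀ (pow_pos hε L)]
      exact hpt x
    calc (∫ x, |PL x|) ≤ ∫ x, (Cmain / ε^L) *
        ∑ j ∈ Finset.range (L+1), ε^j * ‖iteratedFDeriv ℝ j g x‖ :=
          MeasureTheory.integral_mono hintPL hintS h1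
      _ = (Cmain / ε^L) * ∑ j ∈ Finset.range (L+1), ε^j *
          ∫ x, ‖iteratedFDeriv ℝ j g x‖ := by
          rw [MeasureTheory.integral_const_mul]
          congr 1
          rw [MeasureTheory.integral_finset_sum _ (fun j _ => (hintg j).const_mul _)]
          apply Finset.sum_congr rfl
          intro j _
          rw [MeasureTheory.integral_const_mul]
  -- final assembly
  have hfun : (fun ξ => Complex.exp (Complex.I * ((K * f ξ : ℝ) : ℂ)) * ((g ξ : ℝ) : ℂ))
      = fun ξ => Complex.exp (Complex.I * K * (f ξ:ℂ)) * ((g ξ : ℝ):ℂ) := by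
    funext ξ
    congr 2
    push_cast
    ring
  have hS0 : (0:ℝ) ≤ ∑ j ∈ Finset.range (L+1), ε^j * ∫ x, ‖iteratedFDeriv ℝ j g x‖ := by
    apply Finset.sum_nonneg
    intro j _
    apply mul_nonneg (by positivity)
    exact MeasureTheory.integral_nonneg fun x => norm_nonneg _
  have hzpowKε : ((K * ε) : ℝ) ^ (-(L : ℤ)) = ((K*ε)^L)⁻¹ := by
    rw [zpow_neg, zpow_natCast]
  rw [hfun, hiter L, hzpowKε]
  calc (1/K)^L * ‖∫ x, Complex.exp (Complex.I * K * (f x:ℂ)) * ((seqP d V g L x : ℝ):ℂ)‖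
      ≤ (1/K)^L * ((Cmain / ε^L) *
          ∑ j ∈ Finset.range (L+1), ε^j * ∫ x, ‖iteratedFDeriv ℝ j g x‖) := by
        apply mul_le_mul_of_nonneg_left (le_trans hIL hSint) (by positivity)
    _ = Cmain * ((K*ε)^L)⁻¹ *
          ∑ j ∈ Finset.range (L+1), ε^j * ∫ x, ‖iteratedFDeriv ℝ j g x‖ := by
        rw [mul_pow, mul_inv, one_div, inv_pow, div_eq_mul_inv]
        ring
    _ ≤ (Cmain + 1) * ((K*ε)^L)⁻¹ *
          ∑ j ∈ Finset.range (L+1), ε^j * ∫ x, ‖iteratedFDeriv ℝ j g x‖ := by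
        apply mul_le_mul_of_nonneg_right ?_ hS0
        apply mul_le_mul_of_nonneg_right (by linarith) (by positivity)


end EP
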